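/- The 3-player zero-sum game H5 on actions {1,2}, with payoff vectors (Player 1 selects matrix, Player 2 row, Player 3 column): matrix 1: (1,1)→(−4,2,2), (1,2)→(−2,1,1), (2,1)→(−2,1,1), (2,2)→(0,0,0); matrix 2: (1,1)→(0,0,0), (1,2)→(−2,1,1), (2,1)→(−2,1,1), (2,2)→(−6,3,3), has a unique Nash equilibrium, in which Player 1 plays action 1 with probability 1 − 1/√6 and Players 2 and 3 each play action 1 with probability 3 − √6; the equilibrium payoff profile is (−4(3−√6), 2(3−√6), 2(3−√6)). -/

import Mathlib

open Set

/-- Expected payoff in a 3-player game where each player has two actions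
(`true` = action 1, `false` = action 2), given the probabilities `p q r` of
playing action 1. -/
noncomputable def exp3 (f : Bool → Bool → Bool → ℝ) (p q r : ℝ) : ℝ :=
  p*q*r * f true true true + p*q*(1-r) * f true true false +
  p*(1-q)*r * f true false true + p*(1-q)*(1-r) * f true false false +
  (1-p)*q*r * f false true true + (1-p)*q*(1-r) * f false true false +
  (1-p)*(1-q)*r * f false false true + (1-p)*(1-q)*(1-r) * f false false false

/-- Payoff to player `i` in the 3-player zero-sum game H5; `true` = action 1. -/
noncomputable def H5 (i : Fin 3) (a b c : Bool) : ℝ :=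
  match a, b, c with
  | true,  true,  true  => ![-4, 2, 2] i
  | true,  true,  false => ![-2, 1, 1] i
  | true,  false, true  => ![-2, 1, 1] i
  | true,  false, false => ![0, 0, 0] i
  | false, true,  true  => ![0, 0, 0] i
  | false, true,  false => ![-2, 1, 1] i
  | false, false, true  => ![-2, 1, 1] i
  | false, false, false => ![-6, 3, 3] i

/-- `(p,q,r)` is a (mixed) Nash equilibrium of H5. -/
def H5NE (p q r : ℝ) : Prop :=
  p ∈ Icc (0:ℝ) 1 ∧ q ∈ Icc (0:ℝ) 1 ∧ r ∈ Icc (0:ℝ) 1 ∧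
  (∀ p' ∈ Icc (0:ℝ) 1, exp3 (H5 0) p' q r ≤ exp3 (H5 0) p q r) ∧
  (∀ q' ∈ Icc (0:ℝ) 1, exp3 (H5 1) p q' r ≤ exp3 (H5 1) p q r) ∧
  (∀ r' ∈ Icc (0:ℝ) 1, exp3 (H5 2) p q r' ≤ exp3 (H5 2) p q r)

lemma e0 (p q r : ℝ) : exp3 (H5 0) p q r = p*(6-6*q-6*r+2*q*r) + (4*q+4*r-2*q*r-6) := by
  simp [exp3, H5]; ring
lemma e1 (p q r : ℝ) : exp3 (H5 1) p q r = q*(3*p+r-p*r-2) + (-3*p+3*p*r-2*r+3) := by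
  simp [exp3, H5]; ring
lemma e2 (p q r : ℝ) : exp3 (H5 2) p q r = r*(3*p+q-p*q-2) + (-3*p+3*p*q-2*q+3) := by
  simp [exp3, H5]; ring

/-- The unique Nash equilibrium of H5 has Player 1 playing action 1 with
probability 1 − 1/√6 and Players 2 and 3 playing action 1 with probability
3 − √6; the equilibrium payoff profile is (−4(3−√6), 2(3−√6), 2(3−√6)). -/
theorem stmt9 :
    (∀ p q r : ℝ, H5NE p q r ↔
      p = 1 - 1 / Real.sqrt 6 ∧ q = 3 - Real.sqrt 6 ∧ r = 3 - Real.sqrt 6) ∧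
    exp3 (H5 0) (1 - 1 / Real.sqrt 6) (3 - Real.sqrt 6) (3 - Real.sqrt 6)
      = -4 * (3 - Real.sqrt 6) ∧
    exp3 (H5 1) (1 - 1 / Real.sqrt 6) (3 - Real.sqrt 6) (3 - Real.sqrt 6)
      = 2 * (3 - Real.sqrt 6) ∧
    exp3 (H5 2) (1 - 1 / Real.sqrt 6) (3 - Real.sqrt 6) (3 - Real.sqrt 6)
      = 2 * (3 - Real.sqrt 6) := by
  have hs : (Real.sqrt 6)^2 = 6 := Real.sq_sqrt (by norm_num)
  set s := Real.sqrt 6 with hsdef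
  have hsnn : (0:ℝ) ≤ s := Real.sqrt_nonneg 6
  have hs2 : (2:ℝ) < s := by nlinarith
  have hs3 : s < 3 := by nlinarith
  have hs0 : (0:ℝ) < s := by linarith
  have hsne : s ≠ 0 := ne_of_gt hs0
  have hpval : (0:ℝ) ≤ 1 - 1/s ∧ 1 - 1/s ≤ 1 := by
    constructor
    · rw [sub_nonneg, div_le_one hs0]; linarith
    · have : 0 < 1/s := by positivity
      linarith
  have hqval : (0:ℝ) ≤ 3 - s ∧ 3 - s ≤ 1 := ⟨by linarith, by linarith⟩
  have hS2 : 3*(1-1/s)+(3-s)-(1-1/s)*(3-s)-2 = 0 := by field_simp; ring_nf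
  constructor
  · intro p q r
    constructor
    · rintro ⟨hp, hq, hr, H1, H2, H3⟩
      have F1a : 0 ≤ p*(6-6*q-6*r+2*q*r) := by
        have h := H1 0 ⟨le_rfl, zero_le_one⟩; rw [e0, e0] at h; linarith [h]
      have F1b : (6-6*q-6*r+2*q*r) ≤ p*(6-6*q-6*r+2*q*r) := by
        have h := H1 1 ⟨zero_le_one, le_rfl⟩; rw [e0, e0] at h; linarith [h]
      have F2a : 0 ≤ q*(3*p+r-p*r-2) := by
        have h := H2 0 ⟨le_rfl, zero_le_one⟩; rw [e1, e1] at h; linarith [h]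
      have F2b : (3*p+r-p*r-2) ≤ q*(3*p+r-p*r-2) := by
        have h := H2 1 ⟨zero_le_one, le_rfl⟩; rw [e1, e1] at h; linarith [h]
      have F3a : 0 ≤ r*(3*p+q-p*q-2) := by
        have h := H3 0 ⟨le_rfl, zero_le_one⟩; rw [e2, e2] at h; linarith [h]
      have F3b : (3*p+q-p*q-2) ≤ r*(3*p+q-p*q-2) := by
        have h := H3 1 ⟨zero_le_one, le_rfl⟩; rw [e2, e2] at h; linarith [h]
      obtain ⟨hp0, hp1⟩ := hp; obtain ⟨hq0, hq1⟩ := hq; obtain ⟨hr0, hr1⟩ := hr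
      have hpi0 : 0 < p := by
        rcases lt_or_eq_of_le hp0 with h | h; · exact h
        exfalso
        have mq := mul_le_mul_of_nonneg_left (show r-2 ≤ (-1:ℝ) by linarith) hq0
        have mr := mul_le_mul_of_nonneg_left (show q-2 ≤ (-1:ℝ) by linarith) hr0
        rw [← h] at F2a F3a
        have hq' : q = 0 := by linarith [F2a, mq]
        have hr' : r = 0 := by linarith [F3a, mr]
        rw [hq', hr', ← h] at F1b; norm_num at F1b
      have hpi1 : p < 1 := by
        rcases lt_or_eq_of_le hp1 with h | h; · exact h
        exfalso
        rw [h] at F2b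
        have hq' : q = 1 := by linarith [F2b]
        rw [h, hq'] at F3b
        have hr' : r = 1 := by linarith [F3b]
        rw [hq', hr', h] at F1a; norm_num at F1a
      have hZ1 : 6-6*q-6*r+2*q*r = 0 := by
        have h1' : 6-6*q-6*r+2*q*r ≤ 0 := by
          by_contra hc; push_neg at hc
          have := mul_lt_mul_of_pos_right hpi1 hc
          linarith [F1b, this]
        have h2' : 0 ≤ 6-6*q-6*r+2*q*r := by
          by_contra hc; push_neg at hc
          have := mul_neg_of_pos_of_neg hpi0 hc
          linarith [F1a]
        linarith
      have hqi0 : 0 < q := by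
        rcases lt_or_eq_of_le hq0 with h | h; · exact h
        exfalso
        rw [← h] at hZ1 F2b F3a
        have hr' : r = 1 := by linarith [hZ1]
        rw [hr'] at F2b F3a
        have hP1 : p ≤ 1/2 := by linarith [F2b]
        have hP2 : 2/3 ≤ p := by linarith [F3a]
        linarith
      have hqi1 : q < 1 := by
        rcases lt_or_eq_of_le hq1 with h | h; · exact h
        exfalso
        rw [h] at hZ1 F2a F3b
        have hr' : r = 0 := by linarith [hZ1]
        rw [hr'] at F2a F3b
        have hP1 : 2/3 ≤ p := by linarith [F2a]
        have hP2 : p ≤ 1/2 := by linarith [F3b]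
        linarith
      have hri0 : 0 < r := by
        rcases lt_or_eq_of_le hr0 with h | h; · exact h
        exfalso; rw [← h] at hZ1
        have : q = 1 := by linarith [hZ1]
        linarith
      have hri1 : r < 1 := by
        rcases lt_or_eq_of_le hr1 with h | h; · exact h
        exfalso; rw [h] at hZ1
        have : q = 0 := by linarith [hZ1]
        linarith
      have hZ2 : 3*p+r-p*r-2 = 0 := by
        have h1' : 3*p+r-p*r-2 ≤ 0 := by
          by_contra hc; push_neg at hc
          have := mul_lt_mul_of_pos_right hqi1 hc
          linarith [F2b, this]
        have h2' : 0 ≤ 3*p+r-p*r-2 := by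
          by_contra hc; push_neg at hc
          have := mul_neg_of_pos_of_neg hqi0 hc
          linarith [F2a]
        linarith
      have hZ3 : 3*p+q-p*q-2 = 0 := by
        have h1' : 3*p+q-p*q-2 ≤ 0 := by
          by_contra hc; push_neg at hc
          have := mul_lt_mul_of_pos_right hri1 hc
          linarith [F3b, this]
        have h2' : 0 ≤ 3*p+q-p*q-2 := by
          by_contra hc; push_neg at hc
          have := mul_neg_of_pos_of_neg hri0 hc
          linarith [F3a]
        linarith
      have hqr : q = r := by
        have h : (r - q) * (1 - p) = 0 := by linear_combination hZ2 - hZ3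
        rcases mul_eq_zero.mp h with h | h
        · linarith
        · exfalso; linarith
      have hqv : q = 3 - s := by
        rw [hqr] at hZ1
        have key : (r - (3-s))*(r - (3+s)) = 0 := by linear_combination hZ1/2 - hs
        rcases mul_eq_zero.mp key with h | h
        · rw [hqr]; linarith
        · exfalso; linarith
      have hpv : p = 1 - 1/s := by
        have hps : p * s = s - 1 := by
          rw [hqv] at hZ3; linear_combination hZ3
        field_simp
        linear_combination hps
      exact ⟨hpv, hqv, hqr ▸ hqv⟩
    · rintro ⟨hpv, hqv, hrv⟩
      subst hpv; subst hqv; subst hrv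
      refine ⟨⟨hpval.1, hpval.2⟩, ⟨hqval.1, hqval.2⟩, ⟨hqval.1, hqval.2⟩, ?_, ?_, ?_⟩
      · intro p' _
        apply le_of_eq
        rw [e0, e0]
        linear_combination (2*p' - 2*(1-1/s)) * hs
      · intro q' _
        apply le_of_eq
        rw [e1, e1]
        linear_combination (q' - (3-s)) * hS2
      · intro r' _
        apply le_of_eq
        rw [e2, e2]
        linear_combination (r' - (3-s)) * hS2
  · refine ⟨?_, ?_, ?_⟩
    · rw [e0]; field_simp; linear_combination (-2) * hs
    · rw [e1]; field_simp; linear_combination (1) * hs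
    · rw [e2]; field_simp; linear_combination (1) * hs
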